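/- Let ν be a positive (locally finite) measure on ℝ which is a tempered distribution. Then there exist constants T < ∞ and C < ∞ such that ν((−r, r)) ≤ C r^T for all r ≥ 1; that is, ν((−r,r)) = O(r^T) as r → ∞. -/
import Mathlib


open MeasureTheory SchwartzMap Filter

noncomputable section

/-- A smooth compactly supported function is a Schwartz function. -/
def mkBumpSchwartz (f : ℝ → ℝ) (hf : ContDiff ℝ ((⊤ : ℕ∞) : WithTop ℕ∞) f)
    (hsupp : HasCompactSupport f) : SchwartzMap ℝ ℝ where
  toFun := f
  smooth' := hf
  decay' := by
    intro k n
    have h1 : HasCompactSupport (iteratedFDeriv ℝ n f) := hsupp.iteratedFDeriv n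
    have h2 : HasCompactSupport fun x : ℝ => ‖x‖ ^ k * ‖iteratedFDeriv ℝ n f x‖ := by
      apply HasCompactSupport.mul_left
      exact h1.norm
    have h3 : Continuous fun x : ℝ => ‖x‖ ^ k * ‖iteratedFDeriv ℝ n f x‖ :=
      (continuous_norm.pow k).mul
        ((hf.continuous_iteratedFDeriv (mod_cast le_top)).norm)
    obtain ⟨C, hC⟩ := h2.exists_bound_of_continuous h3
    exact ⟨C, fun x => (le_abs_self _).trans ((Real.norm_eq_abs _ ▸ hC x))⟩

@[simp] lemma mkBumpSchwartz_apply (f : ℝ → ℝ) (hf : ContDiff ℝ ((⊤ : ℕ∞) : WithTop ℕ∞) f)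
    (hsupp : HasCompactSupport f) (x : ℝ) : mkBumpSchwartz f hf hsupp x = f x := rfl

/-- **Lemma.** Let `ν` be a positive locally finite measure on ℝ which is a tempered
distribution: every Schwartz function is `ν`-integrable and `φ ↦ ∫ φ dν` is continuous
on the Schwartz space. Then there are `T, C < ∞` with `ν((-r, r)) ≤ C rᵀ` for `r ≥ 1`. -/
theorem tempered_measure_has_polynomial_growth
    (ν : Measure ℝ) [IsLocallyFiniteMeasure ν]
    (hint : ∀ φ : SchwartzMap ℝ ℝ, Integrable (⇑φ) ν)
    (hcont : ∃ S : SchwartzMap ℝ ℝ →L[ℝ] ℝ, ∀ φ : SchwartzMap ℝ ℝ, S φ = ∫ x, φ x ∂ν) :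
    ∃ T C : ℝ, ∀ r : ℝ, 1 ≤ r → ν (Set.Ioo (-r) r) ≤ ENNReal.ofReal (C * r ^ T) := by
  obtain ⟨S, hS⟩ := hcont
  -- bound `‖S φ‖` by finitely many Schwartz seminorms
  have hq : Continuous fun φ : SchwartzMap ℝ ℝ => ‖S φ‖ := S.continuous.norm
  obtain ⟨s, C₀, hC₀ne, hC₀⟩ := Seminorm.bound_of_continuous (schwartz_withSeminorms ℝ ℝ ℝ)
    ((normSeminorm ℝ ℝ).comp S.toLinearMap) (by exact hq)
  -- the bump function
  set φ : ContDiffBump (0 : ℝ) := ⟨1, 2, one_pos, one_lt_two⟩ with hφdef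
  -- uniform bounds on the derivatives of the bump
  have hDn : ∀ n : ℕ, ∃ D : ℝ, 0 ≤ D ∧ ∀ y : ℝ, ‖iteratedFDeriv ℝ n (⇑φ) y‖ ≤ D := by
    intro n
    obtain ⟨D, hD⟩ := ((φ.hasCompactSupport.iteratedFDeriv n).norm).exists_bound_of_continuous
      (((φ.contDiff (n := (⊤ : ℕ∞))).continuous_iteratedFDeriv
        (mod_cast le_top)).norm)
    exact ⟨D, le_trans (norm_nonneg _) ((le_abs_self _).trans (Real.norm_eq_abs _ ▸ hD 0)),
      fun y => (le_abs_self _).trans (Real.norm_eq_abs _ ▸ hD y)⟩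
  -- exponent and constant
  set K : ℕ := (s.sup fun p => p.1) with hK
  choose D hD0 hDle using hDn
  set Dmax : ℝ := 1 ⊔ NNReal.toReal (s.sup fun p : ℕ × ℕ => Real.toNNReal (D p.2)) with hDmaxdef
  have hDmax0 : 0 ≤ Dmax := le_trans zero_le_one le_sup_left
  have hDmaxD : ∀ p ∈ s, D (Prod.snd p) ≤ Dmax := by
    intro p hp
    refine le_trans ?_ le_sup_right
    rw [← Real.coe_toNNReal (D p.2) (hD0 p.2)]
    exact_mod_cast Finset.le_sup (f := fun p => Real.toNNReal (D p.2)) hp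
  refine ⟨K, (C₀ : ℝ) * Dmax * 2 ^ K, ?_⟩
  intro r hr
  have hr0 : (0 : ℝ) < r := lt_of_lt_of_le one_pos hr
  -- the rescaled bump as a Schwartz function
  set L : ℝ →L[ℝ] ℝ := r⁻¹ • ContinuousLinearMap.id ℝ ℝ with hL
  have hLapp : ∀ x : ℝ, L x = r⁻¹ * x := fun x => rfl
  have hLnorm : ‖L‖ ≤ 1 := by
    apply ContinuousLinearMap.opNorm_le_bound _ zero_le_one
    intro x
    rw [hLapp, one_mul, Real.norm_eq_abs, Real.norm_eq_abs, abs_mul, abs_inv, abs_of_pos hr0]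
    calc r⁻¹ * |x| ≤ 1 * |x| := by
          apply mul_le_mul_of_nonneg_right (inv_le_one_of_one_le₀ hr) (abs_nonneg x)
      _ = |x| := one_mul _
  have hsmooth : ContDiff ℝ ((⊤ : ℕ∞) : WithTop ℕ∞) (⇑φ ∘ ⇑L) := φ.contDiff.comp L.contDiff
  have hout : ∀ y : ℝ, ¬ ‖y‖ ≤ 2 * r → (⇑φ ∘ ⇑L) y = 0 := by
    intro y hy
    simp only [Function.comp_apply, hLapp]
    apply φ.zero_of_le_dist
    simp only [hφdef, dist_zero_right]
    rw [Real.norm_eq_abs, abs_mul, abs_inv, abs_of_pos hr0, le_inv_mul_iff₀ hr0]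
    rw [not_le, Real.norm_eq_abs] at hy
    linarith
  have hsupp : HasCompactSupport (⇑φ ∘ ⇑L) := by
    apply HasCompactSupport.intro (isCompact_closedBall (0 : ℝ) (2 * r))
    intro x hx
    apply hout
    simpa [dist_zero_right, not_le] using hx
  set Φr : SchwartzMap ℝ ℝ := mkBumpSchwartz (⇑φ ∘ ⇑L) hsmooth hsupp with hΦr
  have hΦrcoe : ⇑Φr = ⇑φ ∘ ⇑L := rfl
  -- seminorm bounds for `Φr`
  have hderiv : ∀ n (x : ℝ),
      ‖iteratedFDeriv ℝ n (⇑φ ∘ ⇑L) x‖ ≤ ‖iteratedFDeriv ℝ n (⇑φ) (L x)‖ := by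
    intro n x
    rw [L.iteratedFDeriv_comp_right φ.contDiff x le_rfl]
    refine le_trans (ContinuousMultilinearMap.norm_compContinuousLinearMap_le _ _) ?_
    calc ‖iteratedFDeriv ℝ n (⇑φ) (L x)‖ * ∏ _i : Fin n, ‖L‖
        ≤ ‖iteratedFDeriv ℝ n (⇑φ) (L x)‖ * 1 := by
          refine mul_le_mul_of_nonneg_left ?_ (norm_nonneg _)
          calc (∏ _i : Fin n, ‖L‖) ≤ ∏ _i : Fin n, (1:ℝ) :=
                Finset.prod_le_prod (fun _ _ => norm_nonneg _) (fun _ _ => hLnorm)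
            _ = 1 := Finset.prod_const_one
      _ = ‖iteratedFDeriv ℝ n (⇑φ) (L x)‖ := mul_one _
  have hsem : ∀ p ∈ s, SchwartzMap.seminorm ℝ p.1 p.2 Φr ≤ (2 * r) ^ K * Dmax := by
    intro p hp
    have h2rK : (0:ℝ) ≤ (2 * r) ^ K * Dmax := by positivity
    apply SchwartzMap.seminorm_le_bound ℝ p.1 p.2 Φr h2rK
    intro x
    rw [hΦrcoe]
    by_cases hx : ‖x‖ ≤ 2 * r
    · have h1 : ‖x‖ ^ p.1 ≤ (2 * r) ^ K := by
        calc ‖x‖ ^ p.1 ≤ (2 * r) ^ p.1 := pow_le_pow_left₀ (norm_nonneg _) hx _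
          _ ≤ (2 * r) ^ K := pow_le_pow_right₀ (by linarith)
              (Finset.le_sup (f := fun p : ℕ × ℕ => p.1) hp)
      have h2 : ‖iteratedFDeriv ℝ p.2 (⇑φ ∘ ⇑L) x‖ ≤ Dmax :=
        le_trans ((hderiv p.2 x).trans (hDle p.2 (L x))) (hDmaxD p hp)
      exact mul_le_mul h1 h2 (norm_nonneg _) (by positivity)
    · have hzero : iteratedFDeriv ℝ p.2 (⇑φ ∘ ⇑L) x = 0 := by
        apply image_eq_zero_of_notMem_tsupport
        intro hmem
        have hmem2 := (tsupport_iteratedFDeriv_subset (𝕜 := ℝ) (f := ⇑φ ∘ ⇑L) p.2) hmem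
        have hsub : tsupport (⇑φ ∘ ⇑L) ⊆ Metric.closedBall (0 : ℝ) (2 * r) := by
          apply closure_minimal _ Metric.isClosed_closedBall
          intro y hy
          rw [Function.mem_support] at hy
          by_contra hyn
          apply hy
          apply hout
          simpa [dist_zero_right, not_le] using hyn
        have := Metric.mem_closedBall.mp (hsub hmem2)
        rw [dist_zero_right] at this
        exact hx this
      rw [hzero, norm_zero, mul_zero]
      positivity
  -- bound `S Φr`
  have hbound : ‖S Φr‖ ≤ (C₀ : ℝ) * ((2 * r) ^ K * Dmax) := by
    have h := hC₀ Φr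
    simp only [Seminorm.smul_apply, NNReal.smul_def, smul_eq_mul] at h
    refine le_trans h (mul_le_mul_of_nonneg_left ?_ C₀.2)
    apply Seminorm.finset_sup_apply_le (by positivity)
    intro p hp
    rw [schwartzSeminormFamily_apply]
    exact hsem p hp
  -- measure bound via the integral
  have hptle : ∀ x ∈ Set.Ioo (-r) r, (1:ℝ) ≤ Φr x := by
    intro x hx
    have h1 : (⇑φ ∘ ⇑L) x = 1 := by
      apply φ.one_of_mem_closedBall
      simp only [hφdef, Metric.mem_closedBall, dist_zero_right, Function.comp_apply]
      rw [hLapp, Real.norm_eq_abs, abs_mul, abs_inv, abs_of_pos hr0,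
        inv_mul_le_iff₀ hr0, mul_one]
      rcases hx with ⟨h1, h2⟩
      rw [abs_le]; constructor <;> linarith
    have : Φr x = (⇑φ ∘ ⇑L) x := by rw [hΦrcoe]
    rw [this, h1]
  have hmeas : ν (Set.Ioo (-r) r) ≤ ENNReal.ofReal (∫ x, Φr x ∂ν) := by
    have hnn : 0 ≤ᵐ[ν] fun x => Φr x := by
      filter_upwards with x
      have : Φr x = (⇑φ ∘ ⇑L) x := by rw [hΦrcoe]
      rw [this]
      exact φ.nonneg
    rw [ofReal_integral_eq_lintegral_ofReal (hint Φr) hnn]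
    calc ν (Set.Ioo (-r) r) = ∫⁻ _x in Set.Ioo (-r) r, 1 ∂ν := by simp
      _ ≤ ∫⁻ x in Set.Ioo (-r) r, ENNReal.ofReal (Φr x) ∂ν := by
          apply setLIntegral_mono' measurableSet_Ioo
          intro x hx
          have h2 := ENNReal.ofReal_le_ofReal (hptle x hx)
          rwa [ENNReal.ofReal_one] at h2
      _ ≤ ∫⁻ x, ENNReal.ofReal (Φr x) ∂ν :=
          lintegral_mono' Measure.restrict_le_self le_rfl
  refine hmeas.trans (ENNReal.ofReal_le_ofReal ?_)
  rw [← hS Φr]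
  have hfin : (C₀ : ℝ) * ((2 * r) ^ K * Dmax) = (C₀ : ℝ) * Dmax * 2 ^ K * r ^ (K : ℝ) := by
    rw [mul_pow, Real.rpow_natCast]; ring
  calc S Φr ≤ ‖S Φr‖ := le_abs_self _
    _ ≤ (C₀ : ℝ) * ((2 * r) ^ K * Dmax) := hbound
    _ = (C₀ : ℝ) * Dmax * 2 ^ K * r ^ (K : ℝ) := hfin

end
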